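/- Let α, m, λ, E ∈ ℂ with λ ≠ 0, let V(z) = α/z + m + λz, and let ω(z) = α/z + m + λz. Suppose ψ(z) = P(z) exp(∫ ω dz) with P a polynomial. Then ψ'' = (V² + V' − E²)ψ holds if and only if P satisfies P''(z) + 2(α/z + m + λz) P'(z) = −(E² ) P(z) + 0, i.e. z P'' + 2(α + mz + λz²) P' + E² z P = 0; and if P is a nonzero polynomial solution of degree d, then necessarily E² = −2λ d. -/

import Mathlib

open Polynomial


/-- First Kovacic subcase for V = α/z + m + λz, ω = V: with ψ = P·Φ where Φ' = ωΦ,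
Φ ≠ 0 on an open nonempty U ⊆ ℂ \ {0}, the equation ψ'' = (V² + V' − E²)ψ holds on U iff
zP'' + 2(α + mz + λz²)P' + E²zP = 0 on U; and any nonzero polynomial solution of
degree d forces E² = −2λd. -/
theorem kovacic_subcase1_quantization (α m lam E : ℂ) (hlam : lam ≠ 0)
    (d : ℕ) (P : Polynomial ℂ) (hP : P ≠ 0)
    (V ω : ℂ → ℂ)
    (hV : ∀ z : ℂ, z ≠ 0 → V z = α / z + m + lam * z)
    (hω : ∀ z : ℂ, z ≠ 0 → ω z = α / z + m + lam * z)
    (U : Set ℂ) (hU : IsOpen U) (hUne : U.Nonempty) (hU0 : (0 : ℂ) ∉ U)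
    (Φ : ℂ → ℂ) (hΦ0 : ∀ z ∈ U, Φ z ≠ 0)
    (hΦ : ∀ z ∈ U, HasDerivAt Φ (ω z * Φ z) z)
    (ψ : ℂ → ℂ) (hψ : ∀ z : ℂ, ψ z = P.eval z * Φ z) :
    ((∀ z ∈ U, deriv (deriv ψ) z = (V z ^ 2 + deriv V z - E ^ 2) * ψ z) ↔
        (∀ z ∈ U, z * (P.derivative.derivative).eval z
          + 2 * (α + m * z + lam * z ^ 2) * P.derivative.eval z
          + E ^ 2 * z * P.eval z = 0)) ∧
      (P.natDegree = d →
        (∀ z : ℂ, z * (P.derivative.derivative).eval z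
          + 2 * (α + m * z + lam * z ^ 2) * P.derivative.eval z
          + E ^ 2 * z * P.eval z = 0) →
        E ^ 2 = -2 * lam * d) := by
  have hψfun : ψ = fun z => P.eval z * Φ z := funext hψ
  -- the first derivative of ψ on U
  set g : ℂ → ℂ := fun z =>
      (P.derivative.eval z + (α / z + m + lam * z) * P.eval z) * Φ z with hg
  set G : ℂ → ℂ := fun z =>
      ((P.derivative.derivative.eval z
          + ((α * (-(z ^ 2)⁻¹) + lam) * P.eval z
            + (α / z + m + lam * z) * P.derivative.eval z)) * Φ z
        + (P.derivative.eval z + (α / z + m + lam * z) * P.eval z)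
          * ((α / z + m + lam * z) * Φ z)) with hG
  have hne : ∀ z ∈ U, z ≠ 0 := fun z hz h => hU0 (h ▸ hz)
  have hw : ∀ z : ℂ, z ≠ 0 →
      HasDerivAt (fun z => α / z + m + lam * z) (α * (-(z ^ 2)⁻¹) + lam) z := by
    intro z hz
    have h1 : HasDerivAt (fun y : ℂ => α * y⁻¹ + m + lam * y)
        (α * (-(z ^ 2)⁻¹) + lam * 1) z :=
      (((hasDerivAt_inv hz).const_mul α).add_const m).add
        ((hasDerivAt_id z).const_mul lam)
    simpa [div_eq_mul_inv] using h1
  have hderivψ : ∀ z ∈ U, HasDerivAt ψ (g z) z := by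
    intro z hz
    rw [hψfun]
    have : HasDerivAt (fun z => P.eval z * Φ z) _ z := (P.hasDerivAt z).mul (hΦ z hz)
    rw [hω z (hne z hz)] at this
    convert this using 1
    simp [hg]; ring
  have hderivg : ∀ z ∈ U, HasDerivAt g (G z) z := by
    intro z hz
    exact ((P.derivative.hasDerivAt z).add
      ((hw z (hne z hz)).mul (P.hasDerivAt z))).mul
      (by simpa [hω z (hne z hz)] using hΦ z hz)
  have hsnd : ∀ z ∈ U, deriv (deriv ψ) z = G z := by
    intro z hz
    have hev : deriv ψ =ᶠ[nhds z] g := by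
      filter_upwards [hU.mem_nhds hz] with y hy
      exact (hderivψ y hy).deriv
    rw [hev.deriv_eq]
    exact (hderivg z hz).deriv
  have hdV : ∀ z ∈ U, deriv V z = α * (-(z ^ 2)⁻¹) + lam := by
    intro z hz
    have hz0 := hne z hz
    have hev : V =ᶠ[nhds z] fun z => α / z + m + lam * z := by
      filter_upwards [isOpen_compl_singleton.mem_nhds hz0] with y hy
      exact hV y hy
    rw [hev.deriv_eq]
    exact (hw z hz0).deriv
  constructor
  · -- equivalence of the two equations on U
    have key : ∀ z ∈ U,
        (deriv (deriv ψ) z = (V z ^ 2 + deriv V z - E ^ 2) * ψ z) ↔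
        (z * (P.derivative.derivative).eval z
          + 2 * (α + m * z + lam * z ^ 2) * P.derivative.eval z
          + E ^ 2 * z * P.eval z = 0) := by
      intro z hz
      have hz0 := hne z hz
      have hΦz := hΦ0 z hz
      have hiden : G z - (((α / z + m + lam * z)) ^ 2
            + (α * (-(z ^ 2)⁻¹) + lam) - E ^ 2) * (P.eval z * Φ z)
          = (z * (P.derivative.derivative).eval z
            + 2 * (α + m * z + lam * z ^ 2) * P.derivative.eval z
            + E ^ 2 * z * P.eval z) * Φ z / z := by
        have hW : z * (α / z + m + lam * z) = α + m * z + lam * z ^ 2 := by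
          field_simp
        simp only [hG]
        rw [eq_div_iff hz0]
        linear_combination (2 * P.derivative.eval z * Φ z) * hW
      rw [hsnd z hz, hdV z hz, hV z hz0, hψ z, ← sub_eq_zero, hiden,
        _root_.div_eq_zero_iff]
      constructor
      · rintro (h | h)
        · exact (mul_eq_zero.mp h).resolve_right hΦz
        · exact absurd h hz0
      · intro h
        exact Or.inl (by rw [h, zero_mul])
    exact ⟨fun h z hz => (key z hz).mp (h z hz), fun h z hz => (key z hz).mpr (h z hz)⟩
  · -- quantization
    intro hd heq
    -- Package as a polynomial identity
    set Q : Polynomial ℂ := X * P.derivative.derivative + C (2 * α) * P.derivative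
        + C (2 * m) * (X * P.derivative) + C (2 * lam) * (X ^ 2 * P.derivative)
        + C (E ^ 2) * (X * P) with hQ
    have hQ0 : Q = 0 := by
      apply Polynomial.funext
      intro z
      have := heq z
      simp only [hQ, eval_add, eval_mul, eval_X, eval_C, eval_pow, eval_zero]
      linear_combination this
    rcases Nat.eq_zero_or_pos d with hd0 | hdpos
    · -- degree 0 case
      subst hd0
      have hPc : P = C (P.coeff 0) := Polynomial.eq_C_of_natDegree_eq_zero hd
      have h1 := heq 1
      rw [hPc] at h1
      simp at h1
      rcases h1 with h1 | h1
      · simp [h1]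
      · exact absurd (hPc.trans (by rw [h1, map_zero])) hP
    · obtain ⟨e, rfl⟩ : ∃ e, d = e + 1 := ⟨d - 1, (Nat.succ_pred_eq_of_pos hdpos).symm⟩
      have hco := congrArg (fun q : Polynomial ℂ => q.coeff (e + 2)) hQ0
      simp only [hQ, coeff_add, coeff_C_mul, coeff_zero] at hco
      rw [show (e + 2) = (e + 1) + 1 from rfl, coeff_X_mul, coeff_X_mul,
        coeff_X_mul, show (e + 1) + 1 = e + 2 from rfl, coeff_X_pow_mul] at hco
      simp only [coeff_derivative] at hco
      have hc1 : P.coeff (e + 1 + 1 + 1) = 0 :=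
        coeff_eq_zero_of_natDegree_lt (by rw [hd]; omega)
      have hc2 : P.coeff (e + 2 + 1) = 0 :=
        coeff_eq_zero_of_natDegree_lt (by rw [hd]; omega)
      have hc3 : P.coeff (e + 1 + 1) = 0 :=
        coeff_eq_zero_of_natDegree_lt (by rw [hd]; omega)
      have hc4 : P.coeff (e + 2) = 0 :=
        coeff_eq_zero_of_natDegree_lt (by rw [hd]; omega)
      rw [hc1, hc3] at hco
      have hlead : P.coeff (e + 1) ≠ 0 := by
        rw [← hd]; exact Polynomial.leadingCoeff_ne_zero.mpr hP
      push_cast at hco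
      have hco2 : (2 * lam * ((e : ℂ) + 1) + E ^ 2) * P.coeff (e + 1) = 0 := by
        linear_combination hco
      have := (mul_eq_zero.mp hco2).resolve_right hlead
      push_cast
      linear_combination this
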